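/- Let α and δ be linear maps on real sequences. Then: (1) the operator (ω,x) ↦ (αω, 0) is bounded on Z₂ if and only if α is bounded from ℓ_f* to ℓ², i.e., there is a constant C such that for every ω ∈ ℓ_f*, αω ∈ ℓ² and ‖αω‖₂ ≤ C‖ω‖_{ℓ_f*}; (2) the operator (ω,x) ↦ (0, δω) is bounded on Z₂ if and only if δ is bounded from ℓ_f* to ℓ_f, i.e., there is a constant C such that for every ω ∈ ℓ_f*, δω ∈ ℓ², KP(δω) ∈ ℓ², and ‖KP(δω)‖₂ + ‖δω‖₂ ≤ C‖ω‖_{ℓ_f*}. -/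
import Mathlib


open scoped BigOperators

noncomputable section

/-- Real sequences. -/
abbrev RSeq : Type := ℕ → ℝ

/-- Membership in ℓ². -/
def memL2 (x : RSeq) : Prop := Summable (fun n => (x n) ^ 2)

/-- The ℓ² norm. -/
noncomputable def l2norm (x : RSeq) : ℝ := Real.sqrt (∑' n, (x n) ^ 2)

/-- The Kalton–Peck map, defined coordinatewise.  (In Lean, `Real.log 0 = 0` and
division by zero is zero, so the conventions `0·log 0 = 0` and `KP 0 = 0` hold.) -/
noncomputable def KP (x : RSeq) : RSeq := fun n => 2 * x n * Real.log (|x n| / l2norm x)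

/-- Membership in the Kalton–Peck space Z₂. -/
def memZ2 (u : RSeq × RSeq) : Prop := memL2 u.2 ∧ memL2 (u.1 - KP u.2)

/-- The Z₂ quasinorm. -/
noncomputable def Z2norm (u : RSeq × RSeq) : ℝ := l2norm (u.1 - KP u.2) + l2norm u.2

/-- A map on pairs of sequences is bounded on Z₂. -/
def BoundedOnZ2 (T : RSeq × RSeq → RSeq × RSeq) : Prop :=
  (∀ u, memZ2 u → memZ2 (T u)) ∧ ∃ C : ℝ, ∀ u, memZ2 u → Z2norm (T u) ≤ C * Z2norm u

/-- The matrix operator associated to four linear maps on sequences. -/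
def matOp (α β δ γ : RSeq →ₗ[ℝ] RSeq) : RSeq × RSeq → RSeq × RSeq :=
  fun u => (α u.1 + β u.2, δ u.1 + γ u.2)

/-- Membership in the Orlicz space ℓ_f = Dom KP. -/
def memLf (x : RSeq) : Prop := memL2 x ∧ memL2 (KP x)

/-- The ℓ_f quasinorm. -/
noncomputable def lfNorm (x : RSeq) : ℝ := l2norm (KP x) + l2norm x

/-- Membership in ℓ_f* = Ran KP. -/
def memLfStar (ω : RSeq) : Prop := ∃ x : RSeq, memL2 x ∧ memL2 (ω - KP x)

/-- The ℓ_f* quasinorm. -/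
noncomputable def lfStarNorm (ω : RSeq) : ℝ :=
  sInf {r : ℝ | ∃ x : RSeq, memL2 x ∧ memL2 (ω - KP x) ∧ r = l2norm (ω - KP x) + l2norm x}

/-- A bounded map on Z₂ is strictly singular if every linear subspace of Z₂ on which it is
bounded below is finite dimensional. -/
def StrictlySingular (T : RSeq × RSeq → RSeq × RSeq) : Prop :=
  ∀ V : Submodule ℝ (RSeq × RSeq), (∀ v ∈ V, memZ2 v) →
    (∃ c > 0, ∀ v ∈ V, c * Z2norm v ≤ Z2norm (T v)) → FiniteDimensional ℝ V

/-- A set of sequences is totally bounded (relatively compact) for the ℓ² norm. -/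
def l2TotallyBounded (A : Set RSeq) : Prop :=
  ∀ ε > 0, ∃ S : Set RSeq, S.Finite ∧
    ∀ a ∈ A, ∃ s ∈ S, memL2 (a - s) ∧ l2norm (a - s) < ε

/-- A map on Z₂ is compact if the image of the unit ball is totally bounded for the
Z₂ quasinorm. -/
def CompactOnZ2 (T : RSeq × RSeq → RSeq × RSeq) : Prop :=
  ∀ ε > 0, ∃ S : Set (RSeq × RSeq), S.Finite ∧
    ∀ u, memZ2 u → Z2norm u ≤ 1 → ∃ s ∈ S, memZ2 (T u - s) ∧ Z2norm (T u - s) < ε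

lemma l2norm_nonneg (x : RSeq) : 0 ≤ l2norm x := Real.sqrt_nonneg _

lemma memL2_zero : memL2 (0 : RSeq) := by
  have h : (fun n : ℕ => ((0:RSeq) n) ^ 2) = fun _ => (0:ℝ) := by funext n; simp
  rw [memL2, h]; exact summable_zero

lemma KP_zero : KP (0 : RSeq) = 0 := by
  funext n; simp [KP]

lemma l2norm_zero : l2norm (0 : RSeq) = 0 := by
  simp [l2norm]

lemma memZ2_pair_zero {y : RSeq} : memZ2 (y, (0 : RSeq)) ↔ memL2 y := by
  simp [memZ2, KP_zero, memL2_zero]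

lemma Z2norm_pair_zero (y : RSeq) : Z2norm (y, (0 : RSeq)) = l2norm y := by
  simp [Z2norm, KP_zero, l2norm_zero]

lemma memL2_zero_sub {y : RSeq} : memL2 ((0 : RSeq) - y) ↔ memL2 y := by
  rw [zero_sub]
  constructor <;> intro h <;> [skip; skip] <;>
    · have := h
      unfold memL2 at this ⊢
      simpa [Pi.neg_apply, neg_sq] using this

lemma l2norm_zero_sub (y : RSeq) : l2norm ((0 : RSeq) - y) = l2norm y := by
  rw [zero_sub]
  unfold l2norm
  congr 1
  exact tsum_congr fun n => by simp [Pi.neg_apply, neg_sq]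

lemma memL2_neg {y : RSeq} : memL2 (-y) ↔ memL2 y := by
  unfold memL2
  constructor <;> intro h <;> simpa [Pi.neg_apply, neg_sq] using h

lemma l2norm_neg (y : RSeq) : l2norm (-y) = l2norm y := by
  unfold l2norm
  congr 1
  exact tsum_congr fun n => by simp [Pi.neg_apply, neg_sq]

lemma memZ2_zero_pair {y : RSeq} : memZ2 ((0 : RSeq), y) ↔ memL2 y ∧ memL2 (KP y) := by
  simp [memZ2, zero_sub, memL2_neg]

lemma Z2norm_zero_pair (y : RSeq) : Z2norm ((0 : RSeq), y) = l2norm (KP y) + l2norm y := by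
  simp [Z2norm, zero_sub, l2norm_neg]

lemma lfStar_bddBelow (ω : RSeq) :
    BddBelow {r : ℝ | ∃ x : RSeq, memL2 x ∧ memL2 (ω - KP x) ∧
      r = l2norm (ω - KP x) + l2norm x} := by
  refine ⟨0, fun r hr => ?_⟩
  obtain ⟨x, -, -, rfl⟩ := hr
  exact add_nonneg (l2norm_nonneg _) (l2norm_nonneg _)

lemma lfStarNorm_nonneg {ω : RSeq} (h : memLfStar ω) : 0 ≤ lfStarNorm ω := by
  obtain ⟨x, hx, h2⟩ := h
  refine le_csInf ⟨_, x, hx, h2, rfl⟩ ?_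
  rintro r ⟨x, -, -, rfl⟩
  exact add_nonneg (l2norm_nonneg _) (l2norm_nonneg _)

lemma lfStarNorm_le {ω x : RSeq} (hx : memL2 x) (h2 : memL2 (ω - KP x)) :
    lfStarNorm ω ≤ l2norm (ω - KP x) + l2norm x :=
  csInf_le (lfStar_bddBelow ω) ⟨x, hx, h2, rfl⟩

lemma le_mul_lfStarNorm {ω : RSeq} {a C : ℝ} (hC : 0 < C) (hω : memLfStar ω)
    (h : ∀ x : RSeq, memL2 x → memL2 (ω - KP x) →
      a ≤ C * (l2norm (ω - KP x) + l2norm x)) :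
    a ≤ C * lfStarNorm ω := by
  obtain ⟨x0, hx0, h20⟩ := hω
  have hle : a / C ≤ lfStarNorm ω := by
    refine le_csInf ⟨_, x0, hx0, h20, rfl⟩ ?_
    rintro r ⟨x, hx, h2, rfl⟩
    exact (div_le_iff₀ hC).mpr (by rw [mul_comm]; exact h x hx h2)
  calc a = C * (a / C) := by field_simp
    _ ≤ C * lfStarNorm ω := mul_le_mul_of_nonneg_left hle hC.le

/-- (1) (ω,x) ↦ (αω, 0) is bounded on Z₂ iff α is bounded from ℓ_f* to ℓ²;
(2) (ω,x) ↦ (0, δω) is bounded on Z₂ iff δ is bounded from ℓ_f* to ℓ_f. -/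
theorem stmt_12 (α δ : RSeq →ₗ[ℝ] RSeq) :
    (BoundedOnZ2 (fun u : RSeq × RSeq => (α u.1, (0 : RSeq))) ↔
      ∃ C : ℝ, ∀ ω : RSeq, memLfStar ω →
        memL2 (α ω) ∧ l2norm (α ω) ≤ C * lfStarNorm ω) ∧
    (BoundedOnZ2 (fun u : RSeq × RSeq => ((0 : RSeq), δ u.1)) ↔
      ∃ C : ℝ, ∀ ω : RSeq, memLfStar ω →
        memL2 (δ ω) ∧ memL2 (KP (δ ω)) ∧
        l2norm (KP (δ ω)) + l2norm (δ ω) ≤ C * lfStarNorm ω) := by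
  constructor
  · constructor
    · rintro ⟨hmem, C, hC⟩
      refine ⟨max C 0 + 1, fun ω hω => ?_⟩
      obtain ⟨x0, hx0, h20⟩ := hω
      have hm : memL2 (α ω) := memZ2_pair_zero.mp (hmem (ω, x0) ⟨hx0, h20⟩)
      refine ⟨hm, ?_⟩
      refine le_mul_lfStarNorm (by positivity) ⟨x0, hx0, h20⟩ (fun x hx h2 => ?_)
      have h1 : l2norm (α ω) ≤ C * Z2norm (ω, x) := by
        simpa [Z2norm_pair_zero] using hC (ω, x) ⟨hx, h2⟩
      have hZ : (0:ℝ) ≤ Z2norm (ω, x) :=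
        add_nonneg (l2norm_nonneg _) (l2norm_nonneg _)
      have heq : Z2norm (ω, x) = l2norm (ω - KP x) + l2norm x := rfl
      have h3 : C * Z2norm (ω, x) ≤ (max C 0 + 1) * Z2norm (ω, x) :=
        mul_le_mul_of_nonneg_right (by linarith [le_max_left C 0]) hZ
      rw [← heq]
      linarith
    · rintro ⟨C, hC⟩
      constructor
      · rintro ⟨ω, x⟩ ⟨hx, h2⟩
        exact memZ2_pair_zero.mpr (hC ω ⟨x, hx, h2⟩).1
      · refine ⟨max C 0 + 1, ?_⟩
        rintro ⟨ω, x⟩ ⟨hx, h2⟩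
        have hωs : memLfStar ω := ⟨x, hx, h2⟩
        have hb := (hC ω hωs).2
        have h0 : 0 ≤ lfStarNorm ω := lfStarNorm_nonneg hωs
        have hle := lfStarNorm_le hx h2
        show Z2norm (α ω, (0:RSeq)) ≤ (max C 0 + 1) * Z2norm (ω, x)
        rw [Z2norm_pair_zero]
        calc l2norm (α ω) ≤ C * lfStarNorm ω := hb
          _ ≤ (max C 0 + 1) * lfStarNorm ω :=
            mul_le_mul_of_nonneg_right (by linarith [le_max_left C 0]) h0
          _ ≤ (max C 0 + 1) * Z2norm (ω, x) :=
            mul_le_mul_of_nonneg_left hle (by positivity)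
  · constructor
    · rintro ⟨hmem, C, hC⟩
      refine ⟨max C 0 + 1, fun ω hω => ?_⟩
      obtain ⟨x0, hx0, h20⟩ := hω
      have hm := memZ2_zero_pair.mp (hmem (ω, x0) ⟨hx0, h20⟩)
      refine ⟨hm.1, hm.2, ?_⟩
      refine le_mul_lfStarNorm (by positivity) ⟨x0, hx0, h20⟩ (fun x hx h2 => ?_)
      have h1 : l2norm (KP (δ ω)) + l2norm (δ ω) ≤ C * Z2norm (ω, x) := by
        simpa [Z2norm_zero_pair] using hC (ω, x) ⟨hx, h2⟩
      have hZ : (0:ℝ) ≤ Z2norm (ω, x) :=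
        add_nonneg (l2norm_nonneg _) (l2norm_nonneg _)
      have heq : Z2norm (ω, x) = l2norm (ω - KP x) + l2norm x := rfl
      have h3 : C * Z2norm (ω, x) ≤ (max C 0 + 1) * Z2norm (ω, x) :=
        mul_le_mul_of_nonneg_right (by linarith [le_max_left C 0]) hZ
      rw [← heq]
      linarith
    · rintro ⟨C, hC⟩
      constructor
      · rintro ⟨ω, x⟩ ⟨hx, h2⟩
        have h := hC ω ⟨x, hx, h2⟩
        exact memZ2_zero_pair.mpr ⟨h.1, h.2.1⟩
      · refine ⟨max C 0 + 1, ?_⟩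
        rintro ⟨ω, x⟩ ⟨hx, h2⟩
        have hωs : memLfStar ω := ⟨x, hx, h2⟩
        have hb := (hC ω hωs).2.2
        have h0 : 0 ≤ lfStarNorm ω := lfStarNorm_nonneg hωs
        have hle := lfStarNorm_le hx h2
        show Z2norm ((0:RSeq), δ ω) ≤ (max C 0 + 1) * Z2norm (ω, x)
        rw [Z2norm_zero_pair]
        calc l2norm (KP (δ ω)) + l2norm (δ ω) ≤ C * lfStarNorm ω := hb
          _ ≤ (max C 0 + 1) * lfStarNorm ω :=
            mul_le_mul_of_nonneg_right (by linarith [le_max_left C 0]) h0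
          _ ≤ (max C 0 + 1) * Z2norm (ω, x) :=
            mul_le_mul_of_nonneg_left hle (by positivity)
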